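/- A function F : X × X → X is associative, quasitrivial, and commutative if and only if there exists a total (linear) ordering ⪯ on X such that F(x,y) = max_⪯(x,y) for all x,y ∈ X. -/

import Mathlib

theorem stmt_2 {X : Type*} [Nonempty X] (F : X → X → X) :
    ((∀ x y z, F (F x y) z = F x (F y z)) ∧
     (∀ x y, F x y = x ∨ F x y = y) ∧
     (∀ x y, F x y = F y x)) ↔
    ∃ r : X → X → Prop, IsLinearOrder X r ∧
      (∀ x y, r x y → F x y = y) ∧ (∀ x y, r y x → F x y = x) := by
  constructor
  · rintro ⟨hassoc, hqt, hcomm⟩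
    refine ⟨fun x y => F x y = y, ?_, fun x y h => h, fun x y h => (hcomm x y).trans h⟩
    have hrefl : ∀ x, F x x = x := fun x => (hqt x x).elim id id
    have htrans' : ∀ a b c : X, F a b = b → F b c = c → F a c = c := by
      intro a b c hab hbc
      calc F a c = F a (F b c) := by rw [hbc]
        _ = F (F a b) c := (hassoc a b c).symm
        _ = F b c := by rw [hab]
        _ = c := hbc
    have hanti : ∀ a b : X, F a b = b → F b a = a → a = b := by
      intro a b hab hba
      calc a = F b a := hba.symm
        _ = F a b := hcomm b a
        _ = b := hab
    have htot' : ∀ a b : X, F a b = b ∨ F b a = a := by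
      intro a b
      rcases hqt a b with h | h
      · exact Or.inr ((hcomm b a).trans h)
      · exact Or.inl h
    exact { toIsPartialOrder := { toIsPreorder := { toRefl := ⟨hrefl⟩, toIsTrans := ⟨htrans'⟩ }, toAntisymm := ⟨hanti⟩ }, toTotal := ⟨htot'⟩ }
  · rintro ⟨r, hlin, h1, h2⟩
    have htot := hlin.toTotal.total
    have htrans : ∀ {a b c}, r a b → r b c → r a c := fun hab hbc =>
      hlin.toIsPreorder.toIsTrans.trans _ _ _ hab hbc
    have hval : ∀ a b, (r a b ∧ F a b = b) ∨ (r b a ∧ F a b = a) := by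
      intro a b
      rcases htot a b with h | h
      · exact Or.inl ⟨h, h1 a b h⟩
      · exact Or.inr ⟨h, h2 a b h⟩
    refine ⟨?_, ?_, ?_⟩
    · intro x y z
      rcases hval x y with ⟨hxy, e1⟩ | ⟨hyx, e1⟩ <;>
        rcases hval y z with ⟨hyz, e2⟩ | ⟨hzy, e2⟩
      · rw [e1, e2, h1 x z (htrans hxy hyz)]
      · rw [e1, e2, e1]
      · rw [e1, e2]
      · rw [e1, e2, e1, h2 x z (htrans hzy hyx)]
    · intro x y
      rcases hval x y with ⟨_, e⟩ | ⟨_, e⟩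
      · exact Or.inr e
      · exact Or.inl e
    · intro x y
      rcases hval x y with ⟨hxy, e⟩ | ⟨hyx, e⟩
      · rw [e, h2 y x hxy]
      · rw [e, h1 y x hyx]
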